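/- arXiv:1002.2586 — 2 statements merged into one kernel-verified Lean document; each statement's English description precedes it below -/
import Mathlib

section
/- Let D = [D₁,…,D_L] ∈ ℝ^{n×nL} be a union of L orthogonal bases with σ(D) = n+1. Then any set of n pairwise orthogonal columns of D is necessarily contained entirely in a single block D_i of D. -/
open Matrix

open Classical in
/-- The spark of a matrix: the smallest number of columns that form a linearly
dependent set; with the convention that it is the number of columns plus one if
all sets of columns are linearly independent. -/
noncomputable def Matrix.spark {α β : Type*} [Fintype α] [Fintype β] (D : Matrix α β ℝ) : ℕ :=
  if ∃ s : Finset β, ¬ LinearIndependent ℝ (fun j : s => fun i => D i j.val) then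
    sInf {k | ∃ s : Finset β, s.card = k ∧ ¬ LinearIndependent ℝ (fun j : s => fun i => D i j.val)}
  else Fintype.card β + 1

/-- The `n × nL` matrix `D = [D₁, …, D_L]` obtained by horizontally concatenating
the `n × n` blocks `Db l`. -/
def unionOfBases {n L : ℕ} (Db : Fin L → Matrix (Fin n) (Fin n) ℝ) :
    Matrix (Fin n) (Fin L × Fin n) ℝ :=
  Matrix.of fun i p => Db p.1 i p.2

set_option maxHeartbeats 1000000 in
/-- If `D = [D₁, …, D_L]` is a union of `L` orthogonal bases with `σ(D) = n + 1`,
then any set of `n` pairwise orthogonal columns of `D` is contained entirely in a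
single block of `D`. -/
theorem orthogonal_columns_in_single_block {n L : ℕ} (hL : 0 < L)
    (Db : Fin L → Matrix (Fin n) (Fin n) ℝ)
    (hD : ∀ l, (Db l)ᵀ * Db l = 1)
    (hspark : (unionOfBases Db).spark = n + 1)
    (Γ : Finset (Fin L × Fin n)) (hcard : Γ.card = n)
    (horth : ∀ p ∈ Γ, ∀ q ∈ Γ, p ≠ q →
      ∑ x : Fin n, unionOfBases Db x p * unionOfBases Db x q = 0) :
    ∃ l : Fin L, ∀ p ∈ Γ, p.1 = l := by
  classical
  set D := unionOfBases Db with hDdef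
  set col : Fin L × Fin n → (Fin n → ℝ) := fun p i => D i p with hcoldef
  -- orthonormality within a block
  have ortho_block : ∀ (l : Fin L) (a b : Fin n),
      (∑ x, Db l x a * Db l x b) = if a = b then (1:ℝ) else 0 := by
    intro l a b
    have h := congrFun (congrFun (hD l) a) b
    simpa [Matrix.mul_apply, Matrix.transpose_apply, Matrix.one_apply] using h
  -- the columns indexed by Γ are orthonormal
  have hdp : ∀ p ∈ Γ, ∀ q ∈ Γ,
      (∑ x, col p x * col q x) = if p = q then (1:ℝ) else 0 := by
    intro p hp q hq
    by_cases h : p = q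
    · subst h
      rw [if_pos rfl]
      have := ortho_block p.1 p.2 p.2
      simpa [hcoldef, hDdef, unionOfBases] using this
    · rw [if_neg h]
      exact horth p hp q hq h
  -- every set of at most n columns is linearly independent
  have hind : ∀ s : Finset (Fin L × Fin n), s.card ≤ n →
      LinearIndependent ℝ (fun j : s => fun i => D i j.val) := by
    intro s hs
    by_contra hdep
    have hex : ∃ t : Finset (Fin L × Fin n),
        ¬ LinearIndependent ℝ (fun j : t => fun i => D i j.val) := ⟨s, hdep⟩
    have hsp : D.spark = sInf {k | ∃ t : Finset (Fin L × Fin n), t.card = k ∧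
        ¬ LinearIndependent ℝ (fun j : t => fun i => D i j.val)} := by
      rw [Matrix.spark, if_pos hex]
    have hle : D.spark ≤ s.card := hsp ▸ Nat.sInf_le ⟨s, rfl, hdep⟩
    rw [hspark] at hle
    omega
  -- trivial case n = 0
  rcases Nat.eq_zero_or_pos n with hn | hn
  · refine ⟨⟨0, hL⟩, fun p hp => ?_⟩
    have : Γ = ∅ := Finset.card_eq_zero.mp (by rw [hcard, hn])
    simp [this] at hp
  -- main case
  by_contra hcon
  push_neg at hcon
  obtain ⟨p₀, hp₀⟩ := Finset.card_pos.mp (hcard ▸ hn)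
  set l := p₀.1 with hl
  obtain ⟨q, hq, hql⟩ := hcon l
  set Γl := Γ.filter (fun p => p.1 = l) with hΓl
  set T := Γ.filter (fun p => ¬ p.1 = l) with hT
  have hsplit : Γl.card + T.card = n := by
    rw [hΓl, hT, Finset.card_filter_add_card_filter_not, hcard]
  have hp₀Γl : p₀ ∈ Γl := Finset.mem_filter.mpr ⟨hp₀, rfl⟩
  have hqT : q ∈ T := Finset.mem_filter.mpr ⟨hq, hql⟩
  have hΓlpos : 0 < Γl.card := Finset.card_pos.mpr ⟨p₀, hp₀Γl⟩
  have hTpos : 0 < T.card := Finset.card_pos.mpr ⟨q, hqT⟩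
  -- find a column of block l not in Γ
  have himg : (Γl.image Prod.snd).card = Γl.card := by
    apply Finset.card_image_of_injOn
    intro a ha b hb hab
    have ha' := (Finset.mem_filter.mp ha).2
    have hb' := (Finset.mem_filter.mp hb).2
    exact Prod.ext (ha'.trans hb'.symm) hab
  obtain ⟨j₀, hj₀⟩ : ∃ j₀ : Fin n, j₀ ∉ Γl.image Prod.snd := by
    by_contra hcontra
    push_neg at hcontra
    have : (Γl.image Prod.snd) = Finset.univ := Finset.eq_univ_iff_forall.mpr hcontra
    have hcc : (Γl.image Prod.snd).card = n := by rw [this, Finset.card_univ, Fintype.card_fin]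
    omega
  have hlj₀ : (l, j₀) ∉ Γ := by
    intro hmem
    exact hj₀ (Finset.mem_image.mpr ⟨(l, j₀), Finset.mem_filter.mpr ⟨hmem, rfl⟩, rfl⟩)
  -- Γ's columns form a basis
  have hΓind : LinearIndependent ℝ (fun j : Γ => fun i => D i j.val) := hind Γ hcard.le
  have hne : Nonempty ↥Γ := ⟨⟨p₀, hp₀⟩⟩
  have hcardΓ : Fintype.card ↥Γ = Module.finrank ℝ (Fin n → ℝ) := by
    simp [Fintype.card_coe, hcard]
  let B := basisOfLinearIndependentOfCardEqFinrank hΓind hcardΓ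
  have hB : ⇑B = fun j : Γ => fun i => D i j.val :=
    coe_basisOfLinearIndependentOfCardEqFinrank hΓind hcardΓ
  set α : ↥Γ → ℝ := fun i => B.repr (col (l, j₀)) i with hα
  have hc : ∑ i : ↥Γ, α i • col i.val = col (l, j₀) := by
    have := B.sum_repr (col (l, j₀))
    rw [hB] at this
    exact this
  -- coefficients on block-l columns vanish
  have key : ∀ i : ↥Γ, i.val.1 = l → α i = 0 := by
    intro i hi
    have hiΓ := i.2
    have hine : i.val ≠ (l, j₀) := by
      intro h; exact hlj₀ (h ▸ hiΓ)
    have e1 : (∑ x, col i.val x * col (l, j₀) x) = 0 := by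
      have hsnd : i.val.2 ≠ j₀ := by
        intro h
        exact hine (Prod.ext hi h)
      have := ortho_block l i.val.2 j₀
      rw [if_neg hsnd] at this
      calc (∑ x, col i.val x * col (l, j₀) x)
          = ∑ x, Db l x i.val.2 * Db l x j₀ := by
            apply Finset.sum_congr rfl
            intro x _
            simp [hcoldef, hDdef, unionOfBases, ← hi]
        _ = 0 := this
    have e2 : (∑ x, col i.val x * col (l, j₀) x) = α i := by
      rw [← hc]
      calc (∑ x, col i.val x * (∑ k : ↥Γ, α k • col k.val) x)
          = ∑ x, ∑ k : ↥Γ, α k * (col i.val x * col k.val x) := by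
            apply Finset.sum_congr rfl
            intro x _
            rw [Finset.sum_apply]
            rw [Finset.mul_sum]
            apply Finset.sum_congr rfl
            intro k _
            simp [Pi.smul_apply, smul_eq_mul]
            ring
        _ = ∑ k : ↥Γ, α k * ∑ x, col i.val x * col k.val x := by
            rw [Finset.sum_comm]
            apply Finset.sum_congr rfl
            intro k _
            rw [Finset.mul_sum]
        _ = ∑ k : ↥Γ, α k * (if i = k then 1 else 0) := by
            apply Finset.sum_congr rfl
            intro k _
            rw [hdp i.val i.2 k.val k.2]
            congr 1
            simp only [Subtype.ext_iff]
        _ = α i := by simp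
    rw [← e2, e1]
  -- express the extra column as a combination of columns outside block l
  set β : Fin L × Fin n → ℝ := fun p => if h : p ∈ Γ then α ⟨p, h⟩ else 0 with hβ
  have hc' : ∑ p ∈ Γ, β p • col p = col (l, j₀) := by
    rw [← hc, ← Finset.sum_attach Γ (fun p => β p • col p)]
    apply Finset.sum_congr rfl
    intro i _
    simp [hβ, i.2]
  have hcT : ∑ p ∈ T, β p • col p = col (l, j₀) := by
    rw [← hc']
    rw [← Finset.sum_filter_add_sum_filter_not Γ (fun p => p.1 = l) (fun p => β p • col p)]
    rw [← hΓl, ← hT]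
    have hzero : ∑ p ∈ Γl, β p • col p = 0 := by
      apply Finset.sum_eq_zero
      intro p hp
      have hpΓ := (Finset.mem_filter.mp hp).1
      have hpl := (Finset.mem_filter.mp hp).2
      rw [hβ]
      simp only [dif_pos hpΓ]
      rw [key ⟨p, hpΓ⟩ hpl]
      simp
    rw [hzero, zero_add]
  have hmemspan : col (l, j₀) ∈ Submodule.span ℝ (col '' ↑T) := by
    rw [← hcT]
    apply Submodule.sum_mem
    intro p hp
    exact Submodule.smul_mem _ _ (Submodule.subset_span ⟨p, hp, rfl⟩)
  -- contradiction with linear independence of S = insert (l,j₀) T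
  set S : Finset (Fin L × Fin n) := insert (l, j₀) T with hS
  have hlj₀T : (l, j₀) ∉ T := fun h => hlj₀ (Finset.mem_filter.mp h).1
  have hScard : S.card ≤ n := by
    rw [hS, Finset.card_insert_of_notMem hlj₀T]
    omega
  have hSind : LinearIndependent ℝ (fun j : S => fun i => D i j.val) := hind S hScard
  have hxS : (l, j₀) ∈ S := Finset.mem_insert_self _ _
  have hnot := hSind.notMem_span_image (s := {i : ↥S | i.val ∈ T})
    (x := ⟨(l, j₀), hxS⟩) (by simp [hlj₀T])
  apply hnot
  have himg2 : (fun j : S => fun i => D i j.val) '' {i : ↥S | i.val ∈ T} = col '' ↑T := by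
    ext v
    constructor
    · rintro ⟨i, hi, rfl⟩
      exact ⟨i.val, hi, rfl⟩
    · rintro ⟨p, hp, rfl⟩
      exact ⟨⟨p, Finset.mem_insert_of_mem hp⟩, hp, rfl⟩
  rw [himg2]
  exact hmemspan
end

section
/- Let D = [D₁,…,D_L] ∈ ℝ^{n×nL} be a union of L orthonormal bases with σ(D) = n+1, and let Q be an nL×nL permutation matrix such that D̂ = DQ is also a union of L orthonormal bases. Then Q is a block permutation: there is a permutation τ of {1,…,L} such that Q maps the set of columns constituting block i of D onto the set of columns constituting block τ(i) of D̂, for every i (i.e., Q does not mix columns from different blocks). -/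
open Matrix

/-- The `l`-th `n × n` block of an `n × nL` matrix. -/
def blockOf {n L : ℕ} (M : Matrix (Fin n) (Fin L × Fin n) ℝ) (l : Fin L) :
    Matrix (Fin n) (Fin n) ℝ :=
  Matrix.of fun i j => M i (l, j)

/-- A permutation matrix: a 0–1 matrix with exactly one entry equal to `1` in each
row and each column. -/
def IsPermMatrix {ι : Type*} [Fintype ι] (Q : Matrix ι ι ℝ) : Prop :=
  (∀ i j, Q i j = 0 ∨ Q i j = 1) ∧
  (∀ i, ∃! j, Q i j = 1) ∧ (∀ j, ∃! i, Q i j = 1)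

lemma spark_le_of_dep {α β : Type*} [Fintype α] [Fintype β] (D : Matrix α β ℝ)
    (s : Finset β) (h : ¬ LinearIndependent ℝ (fun j : s => fun i => D i j.val)) :
    D.spark ≤ s.card := by
  classical
  rw [Matrix.spark, if_pos ⟨s, h⟩]
  exact Nat.sInf_le ⟨s, rfl, h⟩

/-- If `D = [D₁, …, D_L]` is a union of `L` orthonormal bases with `σ(D) = n + 1`
and `Q` is a permutation matrix such that `D̂ = D Q` is also a union of `L`
orthonormal bases, then `Q` does not mix columns from different blocks: there is a
permutation `τ` of the block indices such that the columns of block `i` of `D` are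
mapped onto the columns of block `τ(i)` of `D̂`. -/
theorem perm_of_unions_is_block_permutation {n L : ℕ} (hL : 0 < L)
    (Db : Fin L → Matrix (Fin n) (Fin n) ℝ)
    (hD : ∀ l, (Db l)ᵀ * Db l = 1)
    (hspark : (unionOfBases Db).spark = n + 1)
    (Q : Matrix (Fin L × Fin n) (Fin L × Fin n) ℝ)
    (hQ : IsPermMatrix Q)
    (hDhat : ∀ l : Fin L,
      (blockOf (unionOfBases Db * Q) l)ᵀ * blockOf (unionOfBases Db * Q) l = 1) :
    ∃ τ : Equiv.Perm (Fin L), ∀ p q : Fin L × Fin n, Q p q ≠ 0 → q.1 = τ p.1 := by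
  classical
  rcases Nat.eq_zero_or_pos n with hn | hn
  · subst hn
    exact ⟨Equiv.refl _, fun p q _ => p.2.elim0⟩
  obtain ⟨h01, hrow, hcol⟩ := hQ
  choose f hf using hrow
  choose g hg using hcol
  have hgf : ∀ p, g (f p) = p := fun p => ((hg (f p)).2 p (hf p).1).symm
  have hfg : ∀ q, f (g q) = q := fun q => ((hf (g q)).2 q (hg q).1).symm
  have ginj : Function.Injective g := Function.LeftInverse.injective hfg
  have Qval : ∀ p q, Q p q = if p = g q then 1 else 0 := by
    intro p q
    by_cases h : p = g q
    · subst h; simp [(hg q).1]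
    · rcases h01 p q with h0 | h1
      · simp [h, h0]
      · exact absurd ((hg q).2 p h1) h
  -- columns of D Q
  have hDQ : ∀ i q, (unionOfBases Db * Q) i q = unionOfBases Db i (g q) := by
    intro i q
    simp only [Matrix.mul_apply, Qval, mul_ite, mul_one, mul_zero]
    simp
  -- orthonormality of the columns of each block of D
  have hcolD : ∀ (l : Fin L) (a b : Fin n),
      (∑ k, Db l k a * Db l k b) = if a = b then (1:ℝ) else 0 := by
    intro l a b
    have := congrFun (congrFun (hD l) a) b
    simpa [Matrix.mul_apply, Matrix.transpose_apply, Matrix.one_apply] using this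
  -- every finset of at most n columns of D is linearly independent
  have hLI : ∀ s : Finset (Fin L × Fin n), s.card ≤ n →
      LinearIndependent ℝ (fun j : s => fun i => unionOfBases Db i j.val) := by
    intro s hs
    by_contra h
    have := spark_le_of_dep (unionOfBases Db) s h
    omega
  set B : Fin L → Matrix (Fin n) (Fin n) ℝ := fun l => blockOf (unionOfBases Db * Q) l with hB
  have hBval : ∀ l i j, B l i j = unionOfBases Db i (g (l, j)) := by
    intro l i j
    simp [hB, blockOf, hDQ]
  have hBBT : ∀ l, B l * (B l)ᵀ = 1 := fun l => mul_eq_one_comm.mp (hDhat l)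
  -- key claim: block l of D̂ contains the whole D-block that g (l, j₀) lives in
  have claim : ∀ (l : Fin L) (j₀ b : Fin n), ∃ j, g (l, j) = ((g (l, j₀)).1, b) := by
    intro l j₀ b
    by_contra hnot
    push_neg at hnot
    set i : Fin L := (g (l, j₀)).1 with hi
    have hbne : b ≠ (g (l, j₀)).2 := by
      intro h
      exact hnot j₀ (by rw [h, hi])
    set d : Fin n → ℝ := fun k => unionOfBases Db k (i, b) with hd
    set t : Fin n → ℝ := (B l)ᵀ.mulVec d with ht
    have ht0 : t j₀ = 0 := by
      have : t j₀ = ∑ k, Db i k (g (l, j₀)).2 * Db i k b := by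
        simp only [ht, Matrix.mulVec, dotProduct, Matrix.transpose_apply]
        apply Finset.sum_congr rfl
        intro k _
        rw [hBval]
        simp [hd, unionOfBases, hi]
      rw [this, hcolD, if_neg (fun h => hbne h.symm)]
    have hdec : ∀ k, d k = ∑ j, t j * B l k j := by
      intro k
      have h1 : (B l).mulVec t = d := by
        rw [ht, Matrix.mulVec_mulVec, hBBT]
        simp
      have h2 := congrFun h1 k
      simp only [Matrix.mulVec, dotProduct] at h2
      rw [← h2]
      exact Finset.sum_congr rfl (fun j _ => mul_comm _ _)
    -- the dependent set of n columns
    set h : Fin n → Fin L × Fin n := fun j => if j = j₀ then (i, b) else g (l, j) with hh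
    have hinj : Function.Injective h := by
      intro a b' hab
      simp only [hh] at hab
      by_cases ha : a = j₀ <;> by_cases hb' : b' = j₀
      · rw [ha, hb']
      · rw [if_pos ha, if_neg hb'] at hab
        exact absurd hab.symm (hnot b')
      · rw [if_neg ha, if_pos hb'] at hab
        exact absurd hab (hnot a)
      · rw [if_neg ha, if_neg hb'] at hab
        exact congrArg Prod.snd (ginj hab)
    set s : Finset (Fin L × Fin n) := Finset.image h Finset.univ with hs
    have hcard : s.card = n := by
      rw [hs, Finset.card_image_of_injective _ hinj]
      simp
    have hmem : ∀ j, h j ∈ s := fun j => Finset.mem_image_of_mem h (Finset.mem_univ j)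
    have LIs := hLI s (le_of_eq hcard)
    have LIh : LinearIndependent ℝ (fun j : Fin n => fun k => unionOfBases Db k (h j)) := by
      have := LIs.comp (fun j => (⟨h j, hmem j⟩ : s)) (by
        intro a b' hab
        exact hinj (congrArg Subtype.val hab))
      exact this
    rw [Fintype.linearIndependent_iff] at LIh
    set c : Fin n → ℝ := fun j => if j = j₀ then 1 else -(t j) with hc
    have hsum : ∑ j, c j • (fun k => unionOfBases Db k (h j)) = 0 := by
      funext k
      simp only [Finset.sum_apply, Pi.smul_apply, smul_eq_mul, Pi.zero_apply]
      rw [← Finset.add_sum_erase _ _ (Finset.mem_univ j₀)]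
      have hrest : ∑ j ∈ Finset.univ.erase j₀, c j * unionOfBases Db k (h j)
          = ∑ j ∈ Finset.univ.erase j₀, -(t j * B l k j) := by
        apply Finset.sum_congr rfl
        intro j hj
        have hjne : j ≠ j₀ := (Finset.mem_erase.mp hj).1
        rw [hc, hh]
        simp only [if_neg hjne]
        rw [hBval]
        ring
      rw [hrest]
      have h0 : c j₀ * unionOfBases Db k (h j₀) = d k := by
        rw [hc, hh]; simp [hd]
      rw [h0, Finset.sum_neg_distrib]
      have : ∑ j ∈ Finset.univ.erase j₀, t j * B l k j
          = ∑ j, t j * B l k j - t j₀ * B l k j₀ := by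
        rw [← Finset.add_sum_erase _ _ (Finset.mem_univ j₀)]; ring
      rw [this, ht0, ← hdec k]
      ring
    have := LIh c hsum j₀
    rw [hc] at this
    simp at this
  -- all columns of block l of D̂ come from the same block of D
  have hconst : ∀ (l : Fin L) (j j' : Fin n), (g (l, j)).1 = (g (l, j')).1 := by
    intro l j j'
    set e : Fin n → Fin n := fun b => Classical.choose (claim l j' b) with he
    have hespec : ∀ b, g (l, e b) = ((g (l, j')).1, b) :=
      fun b => Classical.choose_spec (claim l j' b)
    have heinj : Function.Injective e := by
      intro a b hab
      have h2 : ((g (l, j')).1, a) = ((g (l, j')).1, b) := by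
        rw [← hespec a, hab, hespec b]
      exact congrArg Prod.snd h2
    have hesurj : Function.Surjective e := Finite.surjective_of_injective heinj
    obtain ⟨b, hb⟩ := hesurj j
    rw [← hb, hespec]
  -- the block permutation
  set j0 : Fin n := ⟨0, hn⟩ with hj0
  set σ : Fin L → Fin L := fun l => (g (l, j0)).1 with hσ
  have hσval : ∀ l j, (g (l, j)).1 = σ l := fun l j => hconst l j j0
  have hσinj : Function.Injective σ := by
    intro l l' hll
    obtain ⟨j, hj⟩ := claim l' j0 (g (l, j0)).2
    have h2 : g (l', j) = g (l, j0) := by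
      rw [hj, hσval l' j0, ← hll, ← hσval l j0]
    exact (congrArg Prod.fst (ginj h2)).symm
  have hσbij : Function.Bijective σ := ⟨hσinj, Finite.surjective_of_injective hσinj⟩
  refine ⟨(Equiv.ofBijective σ hσbij).symm, ?_⟩
  intro p q hpq
  have hq : p = g q := by
    by_contra h
    rw [Qval, if_neg h] at hpq
    exact hpq rfl
  have h2 : σ q.1 = p.1 := by
    rw [← hσval q.1 q.2, hq]
  rw [← h2]
  exact (Equiv.symm_apply_apply (Equiv.ofBijective σ hσbij) q.1).symm
end
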